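/- For every compact set Σ ⊆ ℂ: (i) Σ ⊆ Q(Σ); (ii) Σ ∩ ℝ = Q(Σ) ∩ ℝ; (iii) z ∈ Q(Σ) if and only if conj(z) ∈ Q(Σ). -/

import Mathlib

open scoped ComplexConjugate
open Complex

noncomputable section

/-- `Σ_z := {(λ − z)(conj λ − z) : λ ∈ Σ}`. -/
def sigmaSet (S : Set ℂ) (z : ℂ) : Set ℂ := (fun l => (l - z) * ((conj l) - z)) '' S

/-- `Q(Σ) := {z : 0 ∈ closed convex hull of Σ_z}`. -/
def QSet (S : Set ℂ) : Set ℂ := {z | (0 : ℂ) ∈ closure (convexHull ℝ (sigmaSet S z))}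

lemma sigma_conj (S : Set ℂ) (z : ℂ) :
    sigmaSet S (conj z) = conj '' sigmaSet S z := by
  unfold sigmaSet
  rw [← Set.image_comp]
  apply Set.image_congr'
  intro l
  simp only [Function.comp_apply, map_mul, map_sub, Complex.conj_conj]
  ring

lemma qset_conj_mem (S : Set ℂ) {z : ℂ} (h : z ∈ QSet S) : conj z ∈ QSet S := by
  simp only [QSet, Set.mem_setOf_eq] at h ⊢
  rw [sigma_conj]
  have hlin : conj '' (convexHull ℝ (sigmaSet S z)) =
      convexHull ℝ (conj '' sigmaSet S z) := by
    exact (Complex.conjLIE.toLinearEquiv.toLinearMap.image_convexHull _).symm ▸ rfl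
  have h0 : (0 : ℂ) ∈ conj '' closure (convexHull ℝ (sigmaSet S z)) :=
    ⟨0, h, map_zero _⟩
  have hsub : conj '' closure (convexHull ℝ (sigmaSet S z)) ⊆
      closure (conj '' (convexHull ℝ (sigmaSet S z))) :=
    image_closure_subset_closure_image Complex.continuous_conj
  rw [hlin] at hsub
  exact hsub h0

lemma mem_qset_of_mem {S : Set ℂ} {z : ℂ} (hz : z ∈ S) : z ∈ QSet S := by
  have : (0 : ℂ) ∈ sigmaSet S z := ⟨z, hz, by ring⟩
  exact subset_closure (subset_convexHull ℝ _ this)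

/-- Lemma 2.1: for compact `Σ ⊆ ℂ`, (i) `Σ ⊆ Q(Σ)`, (ii) `Σ ∩ ℝ = Q(Σ) ∩ ℝ`, and
(iii) `z ∈ Q(Σ)` iff `conj z ∈ Q(Σ)`. -/
theorem stmt1 (S : Set ℂ) (hS : IsCompact S) :
    S ⊆ QSet S ∧
    S ∩ Set.range ((↑) : ℝ → ℂ) = QSet S ∩ Set.range ((↑) : ℝ → ℂ) ∧
    ∀ z : ℂ, z ∈ QSet S ↔ conj z ∈ QSet S := by
  refine ⟨fun z hz => mem_qset_of_mem hz, ?_, fun z => ⟨qset_conj_mem S, fun h => by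
    simpa using qset_conj_mem S h⟩⟩
  apply Set.Subset.antisymm
  · exact Set.inter_subset_inter_left _ (fun z hz => mem_qset_of_mem hz)
  · rintro z ⟨hzQ, r, rfl⟩
    refine ⟨?_, r, rfl⟩
    rcases S.eq_empty_or_nonempty with h | hne
    · exfalso
      simp only [QSet, sigmaSet, h, Set.image_empty, convexHull_empty, closure_empty,
        Set.mem_setOf_eq, Set.mem_empty_iff_false] at hzQ
    · set d := Metric.infDist (↑r : ℂ) S with hd
      have hdnn : 0 ≤ d := Metric.infDist_nonneg
      have hC : closure (convexHull ℝ (sigmaSet S (↑r))) ⊆ {w : ℂ | d ^ 2 ≤ w.re} := by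
        apply closure_minimal
        · apply convexHull_min
          · rintro w ⟨l, hl, rfl⟩
            dsimp only
            have hconj : (conj l - (r : ℂ)) = conj (l - (r : ℂ)) := by
              simp [map_sub, Complex.conj_ofReal]
            rw [hconj, Complex.mul_conj]
            simp only [Set.mem_setOf_eq, Complex.ofReal_re]
            have h1 : d ≤ dist (↑r : ℂ) l := Metric.infDist_le_dist_of_mem hl
            have h2 : Complex.normSq (l - ↑r) = dist (↑r : ℂ) l ^ 2 := by
              rw [Complex.normSq_eq_norm_sq, Complex.dist_eq, norm_sub_rev]
            rw [h2]
            exact pow_le_pow_left₀ hdnn h1 2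
          · exact convex_halfSpace_re_ge _
        · exact isClosed_le continuous_const Complex.continuous_re
      have := hC hzQ
      simp only [Set.mem_setOf_eq, Complex.zero_re] at this
      have hd0 : d = 0 := le_antisymm (by nlinarith) hdnn
      have hmem : (↑r : ℂ) ∈ closure S :=
        (Metric.mem_closure_iff_infDist_zero hne).2 hd0
      rwa [hS.isClosed.closure_eq] at hmem

end
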